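/- For fixed P > 0, the function A(n) = P²·cot(π/n)/(4n) is strictly increasing on (2, ∞). -/

import Mathlib

open Real

lemma xcot_strictAntiOn :
    StrictAntiOn (fun x : ℝ => x * Real.cos x / Real.sin x) (Set.Ioo 0 (π/2)) := by
  apply strictAntiOn_of_deriv_neg (convex_Ioo _ _)
  · apply ContinuousOn.div
    · exact (continuous_id.mul Real.continuous_cos).continuousOn
    · exact Real.continuous_sin.continuousOn
    · intro x hx
      exact ne_of_gt (Real.sin_pos_of_pos_of_lt_pi hx.1 (lt_trans hx.2 (by linarith [Real.pi_pos])))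
  · intro x hx
    rw [interior_Ioo] at hx
    have hs : Real.sin x ≠ 0 :=
      ne_of_gt (Real.sin_pos_of_pos_of_lt_pi hx.1 (lt_trans hx.2 (by linarith [Real.pi_pos])))
    have hd : HasDerivAt (fun x : ℝ => x * Real.cos x / Real.sin x)
        (((Real.cos x - x * Real.sin x) * Real.sin x - (x * Real.cos x) * Real.cos x)
          / Real.sin x ^ 2) x := by
      have h1 : HasDerivAt (fun x : ℝ => x * Real.cos x)
          (1 * Real.cos x + x * (-Real.sin x)) x :=
        (hasDerivAt_id x).mul (Real.hasDerivAt_cos x)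
      have := h1.div (Real.hasDerivAt_sin x) hs
      refine this.congr_deriv ?_
      ring
    rw [hd.deriv]
    apply div_neg_of_neg_of_pos
    · have hsc : Real.sin x * Real.cos x < x := by
        have h2 : Real.sin (2 * x) < 2 * x := Real.sin_lt (by linarith [hx.1])
        rw [Real.sin_two_mul] at h2
        linarith
      have hpy : Real.sin x ^ 2 + Real.cos x ^ 2 = 1 := Real.sin_sq_add_cos_sq x
      have heq : (Real.cos x - x * Real.sin x) * Real.sin x - (x * Real.cos x) * Real.cos x
          = Real.sin x * Real.cos x - x := by linear_combination (-x) * hpy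
      linarith [heq]
    · positivity

theorem area_strictMono (P : ℝ) (hP : 0 < P) :
    StrictMonoOn
      (fun n : ℝ => P ^ 2 * (Real.cos (π / n) / Real.sin (π / n)) / (4 * n))
      (Set.Ioi (2 : ℝ)) := by
  have hπ := Real.pi_pos
  have key : ∀ n : ℝ, n ∈ Set.Ioi (2:ℝ) →
      P ^ 2 * (Real.cos (π / n) / Real.sin (π / n)) / (4 * n)
        = P ^ 2 / (4 * π) * ((π / n) * Real.cos (π / n) / Real.sin (π / n)) := by
    intro n hn
    have hn0 : n ≠ 0 := by simp at hn; linarith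
    by_cases hs : Real.sin (π / n) = 0
    · simp [hs]
    · field_simp
  have mem : ∀ n : ℝ, n ∈ Set.Ioi (2:ℝ) → π / n ∈ Set.Ioo 0 (π/2) := by
    intro n hn
    simp only [Set.mem_Ioi] at hn
    constructor
    · positivity
    · rw [div_lt_div_iff₀ (by linarith) (by norm_num)]
      nlinarith
  intro a ha b hb hab
  simp only
  rw [key a ha, key b hb]
  have hgt : π / b < π / a := by
    simp only [Set.mem_Ioi] at ha hb
    apply div_lt_div_of_pos_left hπ (by linarith) hab
  have := xcot_strictAntiOn (mem b hb) (mem a ha) hgt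
  have hc : 0 < P ^ 2 / (4 * π) := by positivity
  exact mul_lt_mul_of_pos_left this hc
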